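/- Let μ be an even probability measure on ℤ with discrete log-concave p.m.f. p, unbounded support, and r* = lim_{k→∞} p(k+1)/p(k). Set ξ* = -log r* (with log 0 = -∞). Then the moment generating function φ_μ(ξ) = Σ_k p(k) e^{kξ} is finite exactly for ξ ∈ (-ξ*, ξ*), and Λ_μ(ξ) → +∞ as ξ → ξ*. -/

import Mathlib

open Filter

set_option maxHeartbeats 1000000

/-- For an even, discrete log-concave p.m.f. `p` on `ℤ` with unbounded support
and ratio limit `r* = lim p(k+1)/p(k)`, the moment generating function
`φ(ξ) = Σ p(k) e^{kξ}` is finite exactly on `(-ξ*, ξ*)` where `ξ* = -log r*`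
(`ξ* = +∞` if `r* = 0`), and `Λ = log φ` tends to `+∞` as `ξ → ξ*`. -/
theorem mgf_convergence_interval (p : ℤ → ℝ)
    (hp0 : ∀ k, 0 ≤ p k) (hpsum : HasSum p 1)
    (heven : ∀ k : ℤ, p (-k) = p k)
    (hsupp : ∀ a b c : ℤ, a ≤ b → b ≤ c → 0 < p a → 0 < p c → 0 < p b)
    (hlc : ∀ k : ℤ, p (k - 1) * p (k + 1) ≤ p k ^ 2)
    (hub : ∀ k : ℤ, ∃ m : ℤ, k ≤ m ∧ 0 < p m)
    (r : ℝ) (hr0 : 0 ≤ r) (hr1 : r < 1)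
    (hr : Tendsto (fun k : ℤ => p (k + 1) / p k) atTop (nhds r)) :
    (∀ ξ : ℝ, Summable (fun k : ℤ => p k * Real.exp ((k : ℝ) * ξ)) ↔
        (r = 0 ∨ |ξ| < -Real.log r)) ∧
      (0 < r →
        Tendsto (fun ξ : ℝ => Real.log (∑' k : ℤ, p k * Real.exp ((k : ℝ) * ξ)))
          (nhdsWithin (-Real.log r) (Set.Iio (-Real.log r))) atTop) ∧
      (r = 0 →
        Tendsto (fun ξ : ℝ => Real.log (∑' k : ℤ, p k * Real.exp ((k : ℝ) * ξ)))
          atTop atTop) := by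
  -- positivity of p everywhere
  have hpos : ∀ k : ℤ, 0 < p k := by
    intro k
    obtain ⟨m, hm, hmp⟩ := hub |k|
    have h1 : 0 < p (-m) := by rw [heven]; exact hmp
    exact hsupp (-m) k m (by have := le_abs_self k; have := neg_abs_le k; omega)
      (by have := le_abs_self k; omega) h1 hmp
  -- ratios are antitone
  have hanti : Antitone (fun k : ℤ => p (k + 1) / p k) := by
    apply antitone_int_of_succ_le
    intro k
    have h := hlc (k + 1)
    have h' : p k * p (k + 1 + 1) ≤ p (k + 1) ^ 2 := by
      have : k + 1 - 1 = k := by ring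
      rwa [this] at h
    rw [div_le_div_iff₀ (hpos (k + 1)) (hpos k)]
    nlinarith [hpos k, hpos (k + 1), hpos (k + 1 + 1)]
  -- each ratio is at least r
  have hrle : ∀ k : ℤ, r ≤ p (k + 1) / p k := by
    intro k
    refine le_of_tendsto hr (eventually_atTop.2 ⟨k, fun j hj => hanti hj⟩)
  have hmul : ∀ k : ℤ, r * p k ≤ p (k + 1) := by
    intro k
    have := hrle k
    rwa [le_div_iff₀ (hpos k)] at this
  -- geometric lower bound on ℕ
  have hgeom : ∀ n : ℕ, p 0 * r ^ n ≤ p (n : ℤ) := by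
    intro n
    induction n with
    | zero => simp
    | succ n ih =>
      have h1 : r * (p 0 * r ^ n) ≤ r * p (n : ℤ) := mul_le_mul_of_nonneg_left ih hr0
      have h2 := hmul (n : ℤ)
      have : ((n : ℤ) + 1) = ((n + 1 : ℕ) : ℤ) := by push_cast; ring
      calc p 0 * r ^ (n + 1) = r * (p 0 * r ^ n) := by ring
        _ ≤ r * p (n : ℤ) := h1
        _ ≤ p ((n : ℤ) + 1) := h2
        _ = p ((n + 1 : ℕ) : ℤ) := by rw [this]
  -- one-sided summability under ratio condition
  have hsum_nat : ∀ ξ : ℝ, r * Real.exp ξ < 1 →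
      Summable (fun n : ℕ => p (n : ℤ) * Real.exp ((n : ℝ) * ξ)) := by
    intro ξ hξ
    have hc0 : 0 ≤ r * Real.exp ξ := by positivity
    set c := (r * Real.exp ξ + 1) / 2 with hc
    have hc1 : c < 1 := by rw [hc]; linarith
    have hcgt : r * Real.exp ξ < c := by rw [hc]; linarith
    apply summable_of_ratio_norm_eventually_le hc1
    have hq' : Tendsto (fun n : ℕ => p ((n : ℤ) + 1) / p (n : ℤ) * Real.exp ξ) atTop
        (nhds (r * Real.exp ξ)) :=
      (hr.comp tendsto_natCast_atTop_atTop).mul_const _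
    filter_upwards [hq'.eventually_lt_const hcgt] with n hn
    have hpn : 0 < p (n : ℤ) := hpos _
    have hpn1 : 0 < p ((n : ℤ) + 1) := hpos _
    have hkey : p ((n : ℤ) + 1) * Real.exp (((n : ℕ) + 1 : ℝ) * ξ)
        = (p ((n : ℤ) + 1) / p (n : ℤ) * Real.exp ξ) * (p (n : ℤ) * Real.exp ((n : ℝ) * ξ)) := by
      rw [show ((n : ℕ) + 1 : ℝ) * ξ = ξ + (n : ℝ) * ξ by ring, Real.exp_add]
      field_simp
    have hcast : ((n + 1 : ℕ) : ℤ) = (n : ℤ) + 1 := by push_cast; ring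
    rw [Real.norm_eq_abs, Real.norm_eq_abs,
      abs_of_nonneg (by positivity), abs_of_nonneg (by positivity), hcast]
    push_cast
    rw [hkey]
    have h2 : 0 ≤ p (n : ℤ) * Real.exp ((n : ℝ) * ξ) := by positivity
    exact mul_le_mul_of_nonneg_right hn.le h2
  -- key summability criterion
  have key : ∀ ξ : ℝ, Summable (fun k : ℤ => p k * Real.exp ((k : ℝ) * ξ)) ↔
      r * Real.exp |ξ| < 1 := by
    intro ξ
    constructor
    · intro hS
      by_contra h
      push_neg at h
      have hS' : Summable (fun n : ℕ => p (n : ℤ) * Real.exp ((n : ℝ) * |ξ|)) := by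
        rcases abs_cases ξ with ⟨hξ, _⟩ | ⟨hξ, _⟩
        · rw [hξ]
          have := hS.comp_injective (fun a b hab => by exact_mod_cast hab :
            Function.Injective (Nat.cast : ℕ → ℤ))
          have h2 := this
          simp only [Function.comp_def, Int.cast_natCast] at h2
          exact h2
        · rw [hξ]
          have := (summable_int_iff_summable_nat_and_neg.mp hS).2
          simp only [heven] at this
          exact this.congr (fun n => by push_cast; ring_nf)
      have h0 : Tendsto (fun n : ℕ => p (n : ℤ) * Real.exp ((n : ℝ) * |ξ|)) atTop (nhds 0) :=
        hS'.tendsto_atTop_zero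
      have hlb : ∀ n : ℕ, p 0 ≤ p (n : ℤ) * Real.exp ((n : ℝ) * |ξ|) := by
        intro n
        have h1 : p 0 * (r * Real.exp |ξ|) ^ n ≤ p (n : ℤ) * Real.exp ((n : ℝ) * |ξ|) := by
          rw [mul_pow, Real.exp_nat_mul]
          have := mul_le_mul_of_nonneg_right (hgeom n) (le_of_lt (pow_pos (Real.exp_pos |ξ|) n))
          calc p 0 * (r ^ n * Real.exp |ξ| ^ n) = p 0 * r ^ n * Real.exp |ξ| ^ n := by ring
            _ ≤ p (n : ℤ) * Real.exp |ξ| ^ n := this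
        have h2 : 1 ≤ (r * Real.exp |ξ|) ^ n := one_le_pow₀ h
        nlinarith [hpos 0]
      have : p 0 ≤ 0 := ge_of_tendsto h0 (Eventually.of_forall hlb)
      exact absurd this (not_le.mpr (hpos 0))
    · intro h
      rw [summable_int_iff_summable_nat_and_neg]
      constructor
      · refine hsum_nat ξ (lt_of_le_of_lt ?_ h)
        exact mul_le_mul_of_nonneg_left (Real.exp_le_exp.2 (le_abs_self ξ)) hr0
      · have hneg : r * Real.exp (-ξ) < 1 := by
          refine lt_of_le_of_lt ?_ h
          exact mul_le_mul_of_nonneg_left (Real.exp_le_exp.2 (neg_le_abs ξ)) hr0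
        have := hsum_nat (-ξ) hneg
        exact this.congr (fun n => by rw [heven]; push_cast; ring_nf)
  refine ⟨fun ξ => ?_, ?_, ?_⟩
  · rw [key]
    rcases eq_or_lt_of_le hr0 with h0 | h0
    · simp only [← h0, eq_self_iff_true, true_or, iff_true, zero_mul]
      norm_num
    · have hrne : r ≠ 0 := ne_of_gt h0
      simp only [hrne, false_or]
      have hre : r * Real.exp |ξ| = Real.exp (Real.log r + |ξ|) := by
        rw [Real.exp_add, Real.exp_log h0]
      rw [hre, Real.exp_lt_one_iff]
      constructor <;> intro <;> linarith
  · -- r > 0 case: divergence at the boundary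
    intro h0
    set t := -Real.log r with ht
    have hlogr : Real.log r < 0 := Real.log_neg h0 hr1
    have ht0 : 0 < t := by rw [ht]; linarith
    have hre : ∀ ξ : ℝ, r * Real.exp ξ = Real.exp (ξ - t) := by
      intro ξ
      rw [ht, show ξ - -Real.log r = Real.log r + ξ by ring, Real.exp_add, Real.exp_log h0]
    have hφ : Tendsto (fun ξ : ℝ => ∑' k : ℤ, p k * Real.exp ((k : ℝ) * ξ))
        (nhdsWithin t (Set.Iio t)) atTop := by
      rw [tendsto_atTop]
      intro M
      obtain ⟨N, hN⟩ := exists_nat_ge (M / (p 0 / 2))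
      have hp2 : 0 < p 0 / 2 := by have := hpos 0; linarith
      have hMN : M ≤ p 0 / 2 * (N + 1) := by
        have h1 : M / (p 0 / 2) ≤ (N : ℝ) := hN
        have h2 : M ≤ p 0 / 2 * N := by
          rw [div_le_iff₀ hp2] at h1; linarith [h1]
        nlinarith
      set ε := min (t / 2) (Real.log 2 / (N + 1)) with hε
      have hlog2 : 0 < Real.log 2 := Real.log_pos (by norm_num)
      have hε0 : 0 < ε := lt_min (by linarith) (by positivity)
      have hεt : t - ε < t := by linarith
      filter_upwards [Ioo_mem_nhdsLT hεt] with ξ hξ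
      obtain ⟨hξ1, hξ2⟩ := hξ
      have hξ0 : 0 < ξ := by
        have : ε ≤ t / 2 := min_le_left _ _
        linarith
      have habs : |ξ| = ξ := abs_of_pos hξ0
      have hsumξ : Summable (fun k : ℤ => p k * Real.exp ((k : ℝ) * ξ)) := by
        rw [key, habs, hre]
        exact Real.exp_lt_one_iff.2 (by linarith)
      -- each term with 0 ≤ n ≤ N is at least p 0 / 2
      have hterm : ∀ n : ℕ, n ≤ N → p 0 / 2 ≤ p (n : ℤ) * Real.exp ((n : ℝ) * ξ) := by
        intro n hn
        have h1 : p 0 * (r * Real.exp ξ) ^ n ≤ p (n : ℤ) * Real.exp ((n : ℝ) * ξ) := by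
          rw [mul_pow, Real.exp_nat_mul]
          have := mul_le_mul_of_nonneg_right (hgeom n) (le_of_lt (pow_pos (Real.exp_pos ξ) n))
          calc p 0 * (r ^ n * Real.exp ξ ^ n) = p 0 * r ^ n * Real.exp ξ ^ n := by ring
            _ ≤ p (n : ℤ) * Real.exp ξ ^ n := this
        have h2 : (1 : ℝ) / 2 ≤ (r * Real.exp ξ) ^ n := by
          rw [hre, ← Real.exp_nat_mul]
          have hεN : (n : ℝ) * (t - ξ) ≤ Real.log 2 := by
            have hεle : ε ≤ Real.log 2 / (N + 1) := min_le_right _ _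
            have h3 : t - ξ ≤ ε := by linarith
            have h4 : (n : ℝ) ≤ N := by exact_mod_cast hn
            have h5 : 0 ≤ t - ξ := by linarith
            calc (n : ℝ) * (t - ξ) ≤ (N + 1) * ε := by nlinarith
              _ ≤ (N + 1) * (Real.log 2 / (N + 1)) := by
                  apply mul_le_mul_of_nonneg_left hεle; positivity
              _ = Real.log 2 := by field_simp
          have : Real.exp (-Real.log 2) ≤ Real.exp ((n : ℝ) * (ξ - t)) := by
            apply Real.exp_le_exp.2
            nlinarith
          rw [Real.exp_neg, Real.exp_log (by norm_num : (0:ℝ) < 2)] at this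
          linarith
        calc p 0 / 2 = p 0 * (1 / 2) := by ring
          _ ≤ p 0 * (r * Real.exp ξ) ^ n := by
              apply mul_le_mul_of_nonneg_left h2 (hpos 0).le
          _ ≤ p (n : ℤ) * Real.exp ((n : ℝ) * ξ) := h1
      -- lower bound tsum over ℤ by a finite sum
      have hfinal : p 0 / 2 * (N + 1) ≤ ∑' k : ℤ, p k * Real.exp ((k : ℝ) * ξ) := by
        have hemb := Summable.sum_le_tsum (f := fun k : ℤ => p k * Real.exp ((k : ℝ) * ξ))
          ((Finset.range (N + 1)).map ⟨(Nat.cast : ℕ → ℤ), Nat.cast_injective⟩)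
          (fun k _ => mul_nonneg (hp0 k) (Real.exp_nonneg _)) hsumξ
        rw [Finset.sum_map] at hemb
        refine le_trans ?_ hemb
        have := Finset.sum_le_sum (f := fun _ : ℕ => p 0 / 2)
          (g := fun n : ℕ => p ((n : ℤ)) * Real.exp (((n : ℤ) : ℝ) * ξ))
          (s := Finset.range (N + 1)) (fun n hn => by
            have hn' : n ≤ N := Nat.lt_succ_iff.mp (Finset.mem_range.mp hn)
            have := hterm n hn'
            simpa using this)
        simp only [Finset.sum_const, Finset.card_range, nsmul_eq_mul] at this
        calc p 0 / 2 * (N + 1) = (N + 1 : ℕ) * (p 0 / 2) := by push_cast; ring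
          _ ≤ _ := this.trans (le_of_eq (Finset.sum_congr rfl (fun n _ => by norm_num)))
      linarith [hMN, hfinal]
    have := Real.tendsto_log_atTop.comp hφ
    exact this
  · -- r = 0 case
    intro h0
    have hmono : ∀ ξ : ℝ, Real.log (p 1) + ξ ≤
        Real.log (∑' k : ℤ, p k * Real.exp ((k : ℝ) * ξ)) := by
      intro ξ
      have hs : Summable (fun k : ℤ => p k * Real.exp ((k : ℝ) * ξ)) := by
        rw [key, h0]; norm_num
      have h1 : p 1 * Real.exp (((1 : ℤ) : ℝ) * ξ) ≤ ∑' k : ℤ, p k * Real.exp ((k : ℝ) * ξ) :=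
        Summable.le_tsum hs 1 (fun j _ => mul_nonneg (hp0 j) (Real.exp_nonneg _))
      have h1' : p 1 * Real.exp ξ ≤ ∑' k : ℤ, p k * Real.exp ((k : ℝ) * ξ) := by
        simpa using h1
      have hlog := Real.log_le_log (mul_pos (hpos 1) (Real.exp_pos ξ)) h1'
      rwa [Real.log_mul (ne_of_gt (hpos 1)) (Real.exp_ne_zero ξ), Real.log_exp] at hlog
    exact tendsto_atTop_mono hmono (tendsto_atTop_add_const_left _ _ tendsto_id)
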